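/- Let F, G : A ⇉ B be two functors between small categories. Then there exists a small category C, a functor P : B → C, and a natural transformation α : P ∘ F → P ∘ G which is a 2-categorical (strict) coinserter: for every small category T, the functor sending K : C → T to the pair (K ∘ P, K ∘ α) is an isomorphism between the category of functors C → T and the category whose objects are pairs (H : B → T, γ : H ∘ F → H ∘ G) and whose morphisms (H, γ) → (H', γ') are natural transformations θ : H → H' with (θ ∘ G) ∘ γ = γ' ∘ (θ ∘ F). -/

import Mathlib

/-!
Statement 4: For functors `F, G : A ⥤ B` between small categories there is a small
category `C`, a functor `P : B ⥤ C` and a natural transformation `α : F ⋙ P ⟶ G ⋙ P`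
which form a strict (2-categorical) coinserter: for every small category `T`, the functor
`K ↦ (P ⋙ K, whiskerRight α K)` is an isomorphism of categories between `C ⥤ T` and the
category of pairs `(H : B ⥤ T, γ : F ⋙ H ⟶ G ⋙ H)`, whose morphisms `(H, γ) ⟶ (H', γ')`
are natural transformations `θ : H ⟶ H'` with `γ ≫ Gθ = Fθ ≫ γ'`.
-/

open CategoryTheory

universe u

variable {A B : Type u} [SmallCategory A] [SmallCategory B]

/-- The category of pairs `(H : B ⥤ T, γ : F ⋙ H ⟶ G ⋙ H)`. -/
structure CoinserterData (F G : A ⥤ B) (T : Type u) [SmallCategory T] where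
  H : B ⥤ T
  γ : F ⋙ H ⟶ G ⋙ H

namespace CoinserterData

variable {F G : A ⥤ B} {T : Type u} [SmallCategory T]

/-- Morphisms of coinserter data: natural transformations compatible with the 2-cells. -/
@[ext]
structure Hom (X Y : CoinserterData F G T) where
  θ : X.H ⟶ Y.H
  comm : X.γ ≫ Functor.whiskerLeft G θ = Functor.whiskerLeft F θ ≫ Y.γ

instance : Category (CoinserterData F G T) where
  Hom X Y := Hom X Y
  id X := ⟨𝟙 X.H, by simp⟩
  comp f g :=
    ⟨f.θ ≫ g.θ, by
      rw [Functor.whiskerLeft_comp, Functor.whiskerLeft_comp, ← Category.assoc, f.comm, Category.assoc,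
        g.comm, ← Category.assoc]⟩
  id_comp f := by apply Hom.ext; simp
  comp_id f := by apply Hom.ext; simp
  assoc f g h := by apply Hom.ext; simp

@[simp]
lemma id_θ (X : CoinserterData F G T) : Hom.θ (𝟙 X) = 𝟙 X.H := rfl

@[simp]
lemma comp_θ {X Y Z : CoinserterData F G T} (f : X ⟶ Y) (g : Y ⟶ Z) :
    Hom.θ (f ≫ g) = f.θ ≫ g.θ := rfl

end CoinserterData

/-- Precomposition with `(P, α)`, sending `K : C ⥤ T` to `(P ⋙ K, whiskerRight α K)`. -/
@[simps]
def coinserterCompare {C : Type u} [SmallCategory C] (F G : A ⥤ B) (P : B ⥤ C)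
    (α : F ⋙ P ⟶ G ⋙ P) (T : Type u) [SmallCategory T] :
    (C ⥤ T) ⥤ CoinserterData F G T where
  obj K := ⟨P ⋙ K, Functor.whiskerRight α K⟩
  map {K L} θ :=
    ⟨Functor.whiskerLeft P θ, by
      ext X
      simpa using θ.naturality (α.app X)⟩
  map_id K := by apply CoinserterData.Hom.ext; simp
  map_comp f g := by apply CoinserterData.Hom.ext; simp

section Construction

namespace CoinserterConstruction

variable (F G : A ⥤ B)

/-- Wrapper for the objects of `B`, as vertices of the generating quiver. -/
structure QB (F G : A ⥤ B) : Type u where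
  as : B

/-- Edges of the quiver generating the coinserter: morphisms of `B` plus a formal
edge `F.obj a ⟶ G.obj a` for every object `a` of `A`. -/
inductive Edge : QB F G → QB F G → Type u
  | of : ∀ {X Y : B}, (X ⟶ Y) → Edge ⟨X⟩ ⟨Y⟩
  | alpha : ∀ (a : A), Edge ⟨F.obj a⟩ ⟨G.obj a⟩

instance : Quiver.{u} (QB F G) where
  Hom X Y := Edge F G X Y

variable {F G} in
/-- An edge, as a length-one path. -/
def toP {X Y : QB F G} (e : X ⟶ Y) : Quiver.Path X Y := Quiver.Hom.toPath e

/-- The relations imposed on the free category. -/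
inductive Rel : ∀ (X Y : Paths (QB F G)), (X ⟶ Y) → (X ⟶ Y) → Prop
  | id (X : B) :
      Rel ⟨X⟩ ⟨X⟩ (toP (Edge.of (𝟙 X))) Quiver.Path.nil
  | comp {X Y Z : B} (f : X ⟶ Y) (g : Y ⟶ Z) :
      Rel ⟨X⟩ ⟨Z⟩ (toP (Edge.of f) ≫ toP (Edge.of g)) (toP (Edge.of (f ≫ g)))
  | nat {a a' : A} (f : a ⟶ a') :
      Rel ⟨F.obj a⟩ ⟨G.obj a'⟩
        (toP (Edge.of (F.map f)) ≫ toP (Edge.alpha a'))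
        (toP (Edge.alpha a) ≫ toP (Edge.of (G.map f)))

/-- The relation as a `HomRel`. -/
def rel : HomRel (Paths (QB F G)) := fun X Y f g => Rel F G X Y f g

/-- The coinserter category. -/
abbrev Cns (F G : A ⥤ B) := CategoryTheory.Quotient (rel F G)

/-- The projection functor `P : B ⥤ C`. -/
def Proj : B ⥤ Cns F G where
  obj X := ⟨⟨X⟩⟩
  map f := Quot.mk _ (toP (Edge.of f))
  map_id X := CategoryTheory.Quotient.sound _ (Rel.id X)
  map_comp f g := (CategoryTheory.Quotient.sound _ (Rel.comp f g)).symm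

/-- The universal 2-cell. -/
def uAlpha : F ⋙ Proj F G ⟶ G ⋙ Proj F G where
  app a := Quot.mk _ (toP (Edge.alpha a))
  naturality a a' f := CategoryTheory.Quotient.sound _ (Rel.nat f)

variable {T : Type u} [SmallCategory T]
variable {F G}

/-- Interpretation of an edge in a coinserter datum. -/
def edgeMap (D : CoinserterData F G T) :
    ∀ {X Y : QB F G}, (X ⟶ Y) → (D.H.obj X.as ⟶ D.H.obj Y.as)
  | _, _, Edge.of f => D.H.map f
  | _, _, Edge.alpha a => D.γ.app a

/-- Auxiliary interpretation of paths. -/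
def pathMapAux (D : CoinserterData F G T) {X Y : QB F G} (p : Quiver.Path X Y) :
    ∀ (Z : T), (D.H.obj Y.as ⟶ Z) → (D.H.obj X.as ⟶ Z) :=
  Quiver.Path.rec (motive := fun Y _ => ∀ (Z : T), (D.H.obj Y.as ⟶ Z) → (D.H.obj X.as ⟶ Z))
    (fun _ g => g) (fun _ e ih _ g => ih _ (edgeMap D e) ≫ g) p

/-- Interpretation of a path in a coinserter datum, arranged so that a path of length
one maps definitionally to the interpretation of its edge. -/
def pathMap (D : CoinserterData F G T) {X Y : QB F G} (p : Quiver.Path X Y) :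
    D.H.obj X.as ⟶ D.H.obj Y.as :=
  Quiver.Path.casesOn (motive := fun Y _ => D.H.obj X.as ⟶ D.H.obj Y.as) p (𝟙 (D.H.obj X.as))
    (fun q e => pathMapAux D q _ (edgeMap D e))

lemma pathMap_cons (D : CoinserterData F G T) {X Y Z : QB F G}
    (p : Quiver.Path X Y) (e : Y ⟶ Z) :
    pathMap D (p.cons e) = pathMap D p ≫ edgeMap D e := by
  cases p with
  | nil => exact (Category.id_comp (edgeMap D e)).symm
  | cons p f => rfl

lemma pathMap_comp (D : CoinserterData F G T) {X Y Z : QB F G}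
    (p : Quiver.Path X Y) (q : Quiver.Path Y Z) :
    pathMap D (p.comp q) = pathMap D p ≫ pathMap D q := by
  induction q with
  | nil => exact (Category.comp_id (pathMap D p)).symm
  | cons q e ih =>
      rw [Quiver.Path.comp_cons, pathMap_cons, pathMap_cons, ih, Category.assoc]

/-- The interpretation functor on the path category. -/
def liftPaths (D : CoinserterData F G T) : Paths (QB F G) ⥤ T where
  obj X := D.H.obj X.as
  map p := pathMap D p
  map_id _ := rfl
  map_comp p q := pathMap_comp D p q

lemma liftPaths_rel (D : CoinserterData F G T) (X Y : Paths (QB F G))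
    (f g : X ⟶ Y) (h : rel F G f g) :
    (liftPaths D).map f = (liftPaths D).map g := by
  induction h with
  | id X => exact D.H.map_id X
  | comp f g => exact (D.H.map_comp f g).symm
  | nat f => exact D.γ.naturality f

/-- The lifted functor on the coinserter. -/
def liftFun (D : CoinserterData F G T) : Cns F G ⥤ T :=
  CategoryTheory.Quotient.lift (rel F G) (liftPaths D) (liftPaths_rel D)

lemma pathMap_natural {D D' : CoinserterData F G T} (f : D ⟶ D') :
    ∀ {X Y : QB F G} (p : Quiver.Path X Y),
      pathMap D p ≫ f.θ.app Y.as = f.θ.app X.as ≫ pathMap D' p := by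
  intro X Y p
  induction p with
  | nil =>
      show 𝟙 _ ≫ _ = _ ≫ 𝟙 _
      rw [Category.id_comp, Category.comp_id]
  | cons p e ih =>
      have hedge : edgeMap D e ≫ f.θ.app _ = f.θ.app _ ≫ edgeMap D' e := by
        change Edge F G _ _ at e
        cases e with
        | of g => exact f.θ.naturality g
        | alpha a => exact NatTrans.congr_app f.comm a
      rw [pathMap_cons, pathMap_cons, Category.assoc, hedge, ← Category.assoc, ih,
        Category.assoc]

variable (F G T) in
/-- The inverse functor to `coinserterCompare`. -/
def Psi : CoinserterData F G T ⥤ (Cns F G ⥤ T) where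
  obj D := liftFun D
  map {D D'} f :=
    CategoryTheory.Quotient.natTransLift _
      { app := fun X => f.θ.app X.as
        naturality := fun X Y p => pathMap_natural f p }
  map_id D := by
    apply CategoryTheory.Quotient.natTrans_ext
    ext X
    rfl
  map_comp f g := by
    apply CategoryTheory.Quotient.natTrans_ext
    ext X
    rfl

lemma pathMap_compare {T : Type u} [SmallCategory T] (K : Cns F G ⥤ T)
    {X Y : QB F G} (p : Quiver.Path X Y) :
    pathMap ((coinserterCompare F G (Proj F G) (uAlpha F G) T).obj K) p
      = K.map ((CategoryTheory.Quotient.functor (rel F G)).map p) := by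
  induction p with
  | nil => exact (K.map_id _).symm
  | cons p e ih =>
      rw [pathMap_cons, ih]
      have h2 : edgeMap ((coinserterCompare F G (Proj F G) (uAlpha F G) T).obj K) e
          = K.map ((CategoryTheory.Quotient.functor (rel F G)).map (toP e)) := by
        change Edge F G _ _ at e
        cases e <;> rfl
      rw [h2]
      exact (K.map_comp _ _).symm

lemma liftFun_compare {T : Type u} [SmallCategory T] (K : Cns F G ⥤ T) :
    liftFun ((coinserterCompare F G (Proj F G) (uAlpha F G) T).obj K) = K := by
  apply CategoryTheory.Quotient.lift_unique' (rel F G)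
  refine Eq.trans (CategoryTheory.Quotient.lift_spec _ _ _) ?_
  fapply CategoryTheory.Functor.ext
  · intro X
    rfl
  · intro X Y p
    show _ = 𝟙 _ ≫ _ ≫ 𝟙 _
    exact ((pathMap_compare K p).trans (Category.comp_id _).symm).trans (Category.id_comp _).symm

end CoinserterConstruction

end Construction

/-- existence of strict coinserters in the 2-category of small categories;
the universal property is an isomorphism of categories, expressed by a strictly inverse
functor. -/
theorem exists_strict_coinserter_in_Cat (F G : A ⥤ B) :
    ∃ (C : Cat.{u, u}) (P : B ⥤ C) (α : F ⋙ P ⟶ G ⋙ P),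
      ∀ T : Cat.{u, u}, ∃ Ψ : CoinserterData F G T ⥤ (↑C ⥤ ↑T),
        coinserterCompare F G P α T ⋙ Ψ = 𝟭 (↑C ⥤ ↑T) ∧
        Ψ ⋙ coinserterCompare F G P α T = 𝟭 (CoinserterData F G ↑T) := by
  refine ⟨Cat.of (CoinserterConstruction.Cns F G), CoinserterConstruction.Proj F G,
    CoinserterConstruction.uAlpha F G, fun T =>
      ⟨CoinserterConstruction.Psi F G T, ?_, ?_⟩⟩
  · fapply CategoryTheory.Functor.ext
    · intro K
      exact CoinserterConstruction.liftFun_compare K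
    · intro K L θ
      apply CategoryTheory.Quotient.natTrans_ext
      apply NatTrans.ext
      funext X
      erw [Functor.whiskerLeft_app, Functor.whiskerLeft_app, NatTrans.comp_app, NatTrans.comp_app, eqToHom_app, eqToHom_app]
      exact (by simp :
        θ.app ((CategoryTheory.Quotient.functor (CoinserterConstruction.rel F G)).obj X)
          = 𝟙 _ ≫ θ.app _ ≫ 𝟙 _)
  · rfl
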